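/- Let (V,E) be a graph, v,w ∈ V with P_{v,w} ≠ ∅, and A ⊆ V with k := disc-width_{v,w}(A) ≥ 1. For each i ∈ {1,…,k}, the level set A_i := {z ∈ A : pos_A(z) = i} is a discrete separating set between v and w (every path from v to w meets A_i), and moreover disc-width_{v,w}(A_i) = 1. -/

import Mathlib

open scoped ENNReal

noncomputable section

namespace DiscPaper

variable {V : Type*}

/-- Number of distinct vertices of the walk `c` lying in `A`. -/
def interCount (G : SimpleGraph V) {v w : V} (c : G.Walk v w) (A : Set V) : ℕ :=
  ({q | q ∈ c.support} ∩ A).ncard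

/-- Discrete width of `A` between `v` and `w`: infimum over walks from `v` to `w`
of the number of vertices of the walk lying in `A` (`⊤` if there is no walk). -/
def discWidth (G : SimpleGraph V) (v w : V) (A : Set V) : ℝ≥0∞ :=
  ⨅ c : G.Walk v w, (interCount G c A : ℝ≥0∞)

/-- `A` is a discrete separating set between `v` and `w`: every walk from `v`
to `w` meets `A`. -/
def IsDiscSep (G : SimpleGraph V) (v w : V) (A : Set V) : Prop :=
  ∀ c : G.Walk v w, ∃ q ∈ c.support, q ∈ A

/-- The discrete position function: minimum, over walks `c` from `v` to `w`
passing through `z`, of the number of points of `A` met along `c` up to and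
including the first occurrence of `z` (`⊤` if no walk passes through `z`). -/
def posA (G : SimpleGraph V) (v w : V) (A : Set V) (z : V) : ℝ≥0∞ :=
  ⨅ (c : G.Walk v w) (i : Fin c.support.length) (_ : c.support.get i = z),
    (({q | q ∈ c.support.take (↑i + 1)} ∩ A).ncard : ℝ≥0∞)

/-- The measure of a set of vertices, given a weight function on vertices. -/
def muSet (μ : V → ℝ≥0∞) (A : Set V) : ℝ≥0∞ := ∑' q : A, μ q

/-- Discrete separating ratio, with the conventions that it is `⊤` when the
width is `0`, and `0` when the width is `⊤` (no walk exists). -/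
def discSR (G : SimpleGraph V) (v w : V) (μ : V → ℝ≥0∞) (A : Set V) : ℝ≥0∞ :=
  if discWidth G v w A = 0 then ⊤ else muSet μ A / discWidth G v w A

/-- A slim separating set: a discrete separating set such that every point of
`A` is the first intersection point with `A` of some walk from `v` to `w`. -/
def Slim (G : SimpleGraph V) (v w : V) (A : Set V) : Prop :=
  IsDiscSep G v w A ∧
    ∀ z ∈ A, ∃ (c : G.Walk v w) (i : Fin c.support.length),
      c.support.get i = z ∧ ∀ j : Fin c.support.length, j < i → c.support.get j ∉ A

end DiscPaper

end

noncomputable section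

namespace Stmt14Aux

open DiscPaper SimpleGraph

variable {V : Type*}

/-- counting helper -/
def cntL (l : List V) (A : Set V) : ℕ := ({q | q ∈ l} ∩ A).ncard

lemma finite_mem (l : List V) : {q : V | q ∈ l}.Finite := by
  induction l with
  | nil => simp
  | cons a l ih =>
    have : {q : V | q ∈ a :: l} = insert a {q : V | q ∈ l} := by ext q; simp
    rw [this]; exact ih.insert a

lemma finite_inter (l : List V) (A : Set V) : ({q | q ∈ l} ∩ A).Finite :=
  (finite_mem l).inter_of_left A

lemma cntL_mono {l l' : List V} (A : Set V) (h : ∀ q ∈ l, q ∈ l') :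
    cntL l A ≤ cntL l' A :=
  Set.ncard_le_ncard (fun q hq => ⟨h q hq.1, hq.2⟩) (finite_inter l' A)

lemma one_le_cntL {l : List V} {A : Set V} {z : V} (hz : z ∈ l) (hzA : z ∈ A) :
    1 ≤ cntL l A :=
  (Set.ncard_pos (finite_inter l A)).mpr ⟨z, hz, hzA⟩

variable {G : SimpleGraph V} {v w : V} {A : Set V}

lemma interCount_eq (c : G.Walk v w) : interCount G c A = cntL c.support A := rfl

lemma discWidth_le (c : G.Walk v w) :
    discWidth G v w A ≤ (cntL c.support A : ℝ≥0∞) :=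
  iInf_le _ c

lemma walk_split : ∀ {u w' : V} (c : G.Walk u w') (j : ℕ) (hj : j < c.support.length),
    ∃ (z : V) (p : G.Walk u z) (_ : G.Walk z w'),
      p.support = c.support.take (j + 1) ∧ z = c.support[j]'hj := by
  intro u w' c
  induction c with
  | nil =>
    intro j hj
    simp only [Walk.support_nil, List.length_singleton] at hj
    interval_cases j
    exact ⟨_, Walk.nil, Walk.nil, by simp, by simp⟩
  | @cons a b c' h p ih =>
    intro j hj
    cases j with
    | zero => exact ⟨a, Walk.nil, Walk.cons h p, by simp, by simp⟩
    | succ j =>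
      simp only [Walk.support_cons, List.length_cons] at hj
      obtain ⟨z, p', q', hp', hz⟩ := ih j (by omega)
      exact ⟨z, Walk.cons h p', q', by simp [hp'], by simpa using hz⟩

lemma posA_le (z : V) (p : G.Walk v z) (q : G.Walk z w) :
    posA G v w A z ≤ (cntL p.support A : ℝ≥0∞) := by
  set c := p.append q with hc
  have hsup : c.support = p.support ++ q.support.tail := Walk.support_append p q
  have hL : 1 ≤ p.support.length := List.length_pos_iff.mpr p.support_ne_nil
  have hlt : p.support.length - 1 < c.support.length := by
    rw [hsup, List.length_append]; omega
  have hget : c.support.get ⟨p.support.length - 1, hlt⟩ = z := by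
    have h1 : c.support.get ⟨p.support.length - 1, hlt⟩ =
        p.support.get ⟨p.support.length - 1, by omega⟩ := by
      simp only [List.get_eq_getElem, hsup]
      exact List.getElem_append_left (by omega)
    rw [h1]
    have := p.getLast_support
    rwa [List.getLast_eq_getElem] at this
  have htake : c.support.take (p.support.length - 1 + 1) = p.support := by
    have : p.support.length - 1 + 1 = p.support.length := by omega
    rw [this, hsup, List.take_left]
  refine le_trans (iInf_le _ c) (le_trans (iInf_le _ ⟨p.support.length - 1, hlt⟩)
    (le_trans (iInf_le _ hget) ?_))
  rw [htake]
  rfl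

lemma le_posA (z : V) (b : ℝ≥0∞)
    (hb : ∀ (p : G.Walk v z) (_ : G.Walk z w), b ≤ (cntL p.support A : ℝ≥0∞)) :
    b ≤ posA G v w A z := by
  refine le_iInf fun c => le_iInf fun j => le_iInf fun hget => ?_
  obtain ⟨z', p, q, hp, hz⟩ := walk_split c j.1 j.2
  have hz' : z' = z := by
    rw [hz, ← hget]; simp [List.get_eq_getElem]
  subst hz'
  have := hb p q
  rw [hp] at this
  exact this

lemma posA_attained (z : V) (h : posA G v w A z ≠ ⊤) :
    ∃ (m : ℕ) (p : G.Walk v z) (_ : G.Walk z w),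
      posA G v w A z = (m : ℝ≥0∞) ∧ cntL p.support A = m := by
  by_cases hT : ∃ (p : G.Walk v z) (_ : G.Walk z w), True
  · obtain ⟨p0, q0, -⟩ := hT
    set T : Set ℕ := {m | ∃ (p : G.Walk v z) (_ : G.Walk z w), cntL p.support A = m} with hTdef
    have hTne : T.Nonempty := ⟨cntL p0.support A, p0, q0, rfl⟩
    obtain ⟨p, q, hpq⟩ := Nat.sInf_mem hTne
    refine ⟨sInf T, p, q, ?_, hpq⟩
    refine le_antisymm ?_ ?_
    · rw [← hpq]; exact posA_le z p q
    · refine le_posA z _ fun p' q' => ?_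
      exact_mod_cast Nat.sInf_le (show cntL p'.support A ∈ T from ⟨p', q', rfl⟩)
  · exfalso
    apply h
    refine le_antisymm le_top (le_posA z ⊤ fun p q => absurd ⟨p, q, trivial⟩ hT)

lemma one_le_posA {z : V} (hz : z ∈ A) : 1 ≤ posA G v w A z := by
  refine le_posA z 1 fun p _ => ?_
  exact_mod_cast one_le_cntL p.end_mem_support hz

variable (G v w A) in
lemma keyB_nil {i : ℕ} (hik : (i : ℝ≥0∞) ≤ discWidth G v w A)
    (z0 : V) (s : G.Walk z0 w) (n : ℕ) (hz0 : z0 ∈ A)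
    (hs : {y | y ∈ s.support} ∩ A ⊆ {z0}) (hpos : posA G v w A z0 ≤ (n : ℝ≥0∞))
    (hni : n < i) : False := by
  have hnt : posA G v w A z0 ≠ ⊤ :=
    fun h => by rw [h] at hpos; exact (ENNReal.natCast_ne_top n) (top_le_iff.mp hpos)
  obtain ⟨m, p, q, hm, hcnt⟩ := posA_attained z0 hnt
  have hmn : m ≤ n := by
    rw [hm] at hpos; exact_mod_cast hpos
  have hsub : {y | y ∈ (p.append s).support} ∩ A ⊆ {y | y ∈ p.support} ∩ A := by
    rintro y ⟨hy, hyA⟩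
    rw [Walk.support_append] at hy
    rcases List.mem_append.mp hy with h1 | h1
    · exact ⟨h1, hyA⟩
    · have : y ∈ s.support := List.mem_of_mem_tail h1
      have : y = z0 := hs ⟨this, hyA⟩
      subst this
      exact ⟨p.end_mem_support, hyA⟩
  have hce : cntL (p.append s).support A ≤ m := by
    rw [← hcnt]
    exact Set.ncard_le_ncard hsub (finite_inter _ _)
  have h1 : (i : ℝ≥0∞) ≤ (n : ℝ≥0∞) := by
    calc (i : ℝ≥0∞) ≤ discWidth G v w A := hik
    _ ≤ (cntL (p.append s).support A : ℝ≥0∞) := discWidth_le _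
    _ ≤ (n : ℝ≥0∞) := by exact_mod_cast le_trans hce hmn
  have : i ≤ n := by exact_mod_cast h1
  omega

variable (G v w A) in
lemma keyB {i : ℕ} (hik : (i : ℝ≥0∞) ≤ discWidth G v w A) :
    ∀ (N : ℕ) {x : V} (q : G.Walk x w), q.length ≤ N →
    ∀ (z0 : V) (s : G.Walk z0 x) (n : ℕ), z0 ∈ A →
      ({y | y ∈ s.support} ∩ A ⊆ {z0}) → posA G v w A z0 ≤ (n : ℝ≥0∞) → n < i →
      ∃ z ∈ q.support, z ∈ A ∧ posA G v w A z = (i : ℝ≥0∞) := by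
  intro N
  induction N with
  | zero =>
    intro x q hq z0 s n hz0 hs hpos hni
    cases q with
    | nil => exact (keyB_nil G v w A hik z0 s n hz0 hs hpos hni).elim
    | cons h q' => simp [Walk.length_cons] at hq
  | succ N ih =>
    intro x q hq z0 s n hz0 hs hpos hni
    cases q with
    | nil => exact (keyB_nil G v w A hik z0 s n hz0 hs hpos hni).elim
    | @cons _ y _ h q' =>
      have hq' : q'.length ≤ N := by
        simp only [Walk.length_cons] at hq; omega
      by_cases hy : y ∈ A
      · -- posA y ≤ n + 1
        have hnt : posA G v w A z0 ≠ ⊤ :=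
          fun hh => by rw [hh] at hpos; exact (ENNReal.natCast_ne_top n) (top_le_iff.mp hpos)
        obtain ⟨m, p, qq, hm, hcnt⟩ := posA_attained z0 hnt
        have hmn : m ≤ n := by rw [hm] at hpos; exact_mod_cast hpos
        have hple : posA G v w A y ≤ ((n + 1 : ℕ) : ℝ≥0∞) := by
          refine le_trans (posA_le y (p.append (s.concat h)) q') ?_
          have hsub : {t | t ∈ (p.append (s.concat h)).support} ∩ A ⊆
              insert y ({t | t ∈ p.support} ∩ A) := by
            rintro t ⟨ht, htA⟩
            rw [Walk.support_append] at ht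
            rcases List.mem_append.mp ht with h1 | h1
            · exact Set.mem_insert_of_mem _ ⟨h1, htA⟩
            · have h2 : t ∈ (s.concat h).support := List.mem_of_mem_tail h1
              rw [Walk.support_concat] at h2
              rcases List.mem_append.mp h2 with h3 | h3
              · have : t = z0 := hs ⟨h3, htA⟩
                subst this
                exact Set.mem_insert_of_mem _ ⟨p.end_mem_support, htA⟩
              · simp only [List.mem_singleton] at h3
                subst h3
                exact Set.mem_insert _ _
          have h4 : cntL (p.append (s.concat h)).support A ≤ m + 1 := by
            rw [← hcnt]
            calc cntL (p.append (s.concat h)).support A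
                ≤ (insert y ({t | t ∈ p.support} ∩ A)).ncard :=
                  Set.ncard_le_ncard hsub ((finite_inter _ _).insert y)
              _ ≤ ({t | t ∈ p.support} ∩ A).ncard + 1 :=
                  Set.ncard_insert_le _ _
          have h5 : cntL (p.append (s.concat h)).support A ≤ n + 1 := by omega
          exact_mod_cast h5
        by_cases hpi : posA G v w A y = (i : ℝ≥0∞)
        · exact ⟨y, by rw [Walk.support_cons]; exact List.mem_cons_of_mem _ q'.start_mem_support, hy, hpi⟩
        · have hnt' : posA G v w A y ≠ ⊤ :=
            fun hh => by rw [hh] at hple; exact (ENNReal.natCast_ne_top (n+1)) (top_le_iff.mp hple)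
          obtain ⟨m', p', q'', hm', _⟩ := posA_attained y hnt'
          have hm'le : m' ≤ n + 1 := by rw [hm'] at hple; exact_mod_cast hple
          have hm'i : m' < i := by
            have : m' ≠ i := fun hh => hpi (by rw [hm', hh])
            omega
          obtain ⟨z, hzq, hz⟩ := ih q' hq' y Walk.nil m' hy
            (by rintro t ⟨ht, -⟩; simpa using ht) (le_of_eq hm') hm'i
          exact ⟨z, by rw [Walk.support_cons]; exact List.mem_cons_of_mem _ hzq, hz⟩
      · have hs' : {t | t ∈ (s.concat h).support} ∩ A ⊆ {z0} := by
          rintro t ⟨ht, htA⟩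
          rw [Walk.support_concat] at ht
          rcases List.mem_append.mp ht with h3 | h3
          · exact hs ⟨h3, htA⟩
          · simp only [List.mem_singleton] at h3; subst h3; exact absurd htA hy
        obtain ⟨z, hzq, hz⟩ := ih q' hq' z0 (s.concat h) n hz0 hs' hpos hni
        exact ⟨z, by rw [Walk.support_cons]; exact List.mem_cons_of_mem _ hzq, hz⟩

variable (G v w A) in
lemma keyB0 {i : ℕ} (hik : (i : ℝ≥0∞) ≤ discWidth G v w A) (h1i : 1 ≤ i) :
    ∀ (N : ℕ) {x : V} (q : G.Walk x w), q.length ≤ N →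
    ∀ (s : G.Walk v x), ({y | y ∈ s.support} ∩ A = ∅) →
      ∃ z ∈ q.support, z ∈ A ∧ posA G v w A z = (i : ℝ≥0∞) := by
  intro N
  induction N with
  | zero =>
    intro x q hq s hs
    cases q with
    | nil =>
      exfalso
      have h0 : cntL s.support A = 0 := by
        unfold cntL; rw [hs]; simp
      have h1 : (i : ℝ≥0∞) ≤ 0 := by
        calc (i : ℝ≥0∞) ≤ discWidth G v w A := hik
        _ ≤ (cntL s.support A : ℝ≥0∞) := discWidth_le _
        _ = 0 := by rw [h0]; simp
      have : i = 0 := by exact_mod_cast le_antisymm h1 zero_le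
      omega
    | cons h q' => simp [Walk.length_cons] at hq
  | succ N ih =>
    intro x q hq s hs
    cases q with
    | nil =>
      exfalso
      have h0 : cntL s.support A = 0 := by
        unfold cntL; rw [hs]; simp
      have h1 : (i : ℝ≥0∞) ≤ 0 := by
        calc (i : ℝ≥0∞) ≤ discWidth G v w A := hik
        _ ≤ (cntL s.support A : ℝ≥0∞) := discWidth_le _
        _ = 0 := by rw [h0]; simp
      have : i = 0 := by exact_mod_cast le_antisymm h1 zero_le
      omega
    | @cons _ y _ h q' =>
      have hq' : q'.length ≤ N := by
        simp only [Walk.length_cons] at hq; omega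
      by_cases hy : y ∈ A
      · have hple : posA G v w A y ≤ ((1 : ℕ) : ℝ≥0∞) := by
          refine le_trans (posA_le y (s.concat h) q') ?_
          have hsub : {t | t ∈ (s.concat h).support} ∩ A ⊆ {y} := by
            rintro t ⟨ht, htA⟩
            rw [Walk.support_concat] at ht
            rcases List.mem_append.mp ht with h3 | h3
            · exfalso
              have hmem : t ∈ {y | y ∈ s.support} ∩ A := ⟨h3, htA⟩
              rw [hs] at hmem
              exact hmem
            · simpa using h3
          have h4 : cntL (s.concat h).support A ≤ 1 := by
            calc cntL (s.concat h).support A ≤ ({y} : Set V).ncard :=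
                Set.ncard_le_ncard hsub (Set.finite_singleton y)
              _ = 1 := Set.ncard_singleton y
          exact_mod_cast Nat.cast_le.mpr h4
        have hge : (1 : ℝ≥0∞) ≤ posA G v w A y := one_le_posA hy
        have hpy : posA G v w A y = ((1 : ℕ) : ℝ≥0∞) := le_antisymm hple (by simpa using hge)
        by_cases hi1 : i = 1
        · subst hi1
          exact ⟨y, by rw [Walk.support_cons]; exact List.mem_cons_of_mem _ q'.start_mem_support, hy, by simpa using hpy⟩
        · obtain ⟨z, hzq, hz⟩ := keyB G v w A hik q'.length q' le_rfl y Walk.nil 1 hy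
            (by rintro t ⟨ht, -⟩; simpa using ht)
            (le_of_eq hpy) (by omega)
          exact ⟨z, by rw [Walk.support_cons]; exact List.mem_cons_of_mem _ hzq, hz⟩
      · have hs' : {t | t ∈ (s.concat h).support} ∩ A = ∅ := by
          ext t
          simp only [Set.mem_inter_iff, Set.mem_empty_iff_false, iff_false, not_and]
          intro ht htA
          rw [Walk.support_concat] at ht
          rcases List.mem_append.mp ht with h3 | h3
          · have hmem : t ∈ {y | y ∈ s.support} ∩ A := ⟨h3, htA⟩
            rw [hs] at hmem
            exact hmem.elim
          · simp only [List.mem_singleton] at h3; subst h3; exact hy htA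
        obtain ⟨z, hzq, hz⟩ := ih q' hq' (s.concat h) hs'
        exact ⟨z, by rw [Walk.support_cons]; exact List.mem_cons_of_mem _ hzq, hz⟩

variable (G v w A) in
lemma sep {i : ℕ} (hik : (i : ℝ≥0∞) ≤ discWidth G v w A) (h1i : 1 ≤ i) (c : G.Walk v w) :
    ∃ z ∈ c.support, z ∈ A ∧ posA G v w A z = (i : ℝ≥0∞) := by
  by_cases hv : v ∈ A
  · have hple : posA G v w A v ≤ ((1 : ℕ) : ℝ≥0∞) := by
      refine le_trans (posA_le v Walk.nil c) ?_
      have h4 : cntL (Walk.nil : G.Walk v v).support A ≤ 1 := by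
        calc cntL (Walk.nil : G.Walk v v).support A ≤ ({v} : Set V).ncard :=
            Set.ncard_le_ncard (by rintro t ⟨ht, -⟩; simpa [Walk.support_nil] using ht)
              (Set.finite_singleton v)
          _ = 1 := Set.ncard_singleton v
      exact_mod_cast Nat.cast_le.mpr h4
    have hge : (1 : ℝ≥0∞) ≤ posA G v w A v := one_le_posA hv
    have hpv : posA G v w A v = ((1 : ℕ) : ℝ≥0∞) := le_antisymm hple (by simpa using hge)
    by_cases hi1 : i = 1
    · subst hi1
      exact ⟨v, c.start_mem_support, hv, by simpa using hpv⟩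
    · exact keyB G v w A hik c.length c le_rfl v Walk.nil 1 hv
        (by rintro t ⟨ht, -⟩; simpa using ht)
        (le_of_eq hpv) (by omega)
  · exact keyB0 G v w A hik h1i c.length c le_rfl Walk.nil
      (Set.eq_empty_iff_forall_notMem.mpr
        (by rintro t ⟨ht, htA⟩; simp [Walk.support_nil] at ht; subst ht; exact hv htA))

lemma first_hit : ∀ {a b : V} (c : G.Walk a b) (S : Set V),
    (∃ y ∈ c.support, y ∈ S) →
    ∃ (z : V) (t : G.Walk a z) (_ : G.Walk z b), z ∈ S ∧ ({y | y ∈ t.support} ∩ S ⊆ {z}) := by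
  intro a b c
  induction c with
  | nil =>
    intro S hS
    obtain ⟨y, hy, hyS⟩ := hS
    simp only [Walk.support_nil, List.mem_singleton] at hy
    subst hy
    exact ⟨y, Walk.nil, Walk.nil, hyS, by rintro u ⟨hu, -⟩; simpa using hu⟩
  | @cons a b' c' h p ih =>
    intro S hS
    by_cases ha : a ∈ S
    · exact ⟨a, Walk.nil, Walk.cons h p, ha, by rintro u ⟨hu, -⟩; simpa using hu⟩
    · have hS' : ∃ y ∈ p.support, y ∈ S := by
        obtain ⟨y, hy, hyS⟩ := hS
        rw [Walk.support_cons] at hy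
        rcases List.mem_cons.mp hy with h1 | h1
        · subst h1; exact absurd hyS ha
        · exact ⟨y, h1, hyS⟩
      obtain ⟨z, t, r, hzS, ht⟩ := ih S hS'
      refine ⟨z, Walk.cons h t, r, hzS, ?_⟩
      rintro u ⟨hu, huS⟩
      rw [Walk.support_cons] at hu
      rcases List.mem_cons.mp hu with h1 | h1
      · subst h1; exact absurd huS ha
      · exact ht ⟨h1, huS⟩

variable (G v w A) in
lemma width_one {i : ℕ} (hne : Nonempty (G.Walk v w))
    (hik : (i : ℝ≥0∞) ≤ discWidth G v w A) (h1i : 1 ≤ i) :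
    discWidth G v w {z ∈ A | posA G v w A z = (i : ℝ≥0∞)} = 1 := by
  classical
  set Ai := {z ∈ A | posA G v w A z = (i : ℝ≥0∞)} with hAi
  have hlow : (1 : ℝ≥0∞) ≤ discWidth G v w Ai := by
    refine le_iInf fun c => ?_
    obtain ⟨z, hz, hzA, hzp⟩ := sep G v w A hik h1i c
    have h1 : 1 ≤ interCount G c Ai := one_le_cntL hz ⟨hzA, hzp⟩
    exact_mod_cast h1
  obtain ⟨c0⟩ := hne
  have hex : ∃ y ∈ c0.reverse.support, y ∈ Ai := by
    obtain ⟨z, hz, hzA, hzp⟩ := sep G v w A hik h1i c0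
    exact ⟨z, by rw [Walk.support_reverse]; exact List.mem_reverse.mpr hz, hzA, hzp⟩
  obtain ⟨zs, t, r0, hzsAi, htAi⟩ := first_hit c0.reverse Ai hex
  set r := t.reverse with hr
  have hrsup : ∀ y, y ∈ r.support → y ∈ t.support := by
    intro y hy; rw [hr, Walk.support_reverse] at hy; exact List.mem_reverse.mp hy
  obtain ⟨hzsA, hzspos⟩ := hzsAi
  have hnt : posA G v w A zs ≠ ⊤ := by rw [hzspos]; exact ENNReal.natCast_ne_top i
  obtain ⟨m, p0, q0, hm, hcnt⟩ := posA_attained zs hnt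
  have hmi : m = i := by
    rw [hzspos] at hm; exact_mod_cast hm.symm
  have hzsmem : zs ∈ p0.support := p0.end_mem_support
  set p'' := p0.takeUntil zs hzsmem with hp''
  have hcnt'' : cntL p''.support A = m := by
    refine le_antisymm ?_ ?_
    · rw [← hcnt]
      exact cntL_mono A (fun q hq => Walk.support_takeUntil_subset _ _ hq)
    · have h2 := posA_le (A := A) zs p'' r
      rw [hm] at h2
      exact_mod_cast h2
  have hcount1 : p''.support.count zs = 1 := Walk.count_support_takeUntil_eq_one p0 hzsmem
  have hslim : ∀ y, y ∈ p''.support → y ∈ Ai → y = zs := by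
    intro y hy hyAi
    by_contra hne'
    obtain ⟨hyA, hypos⟩ := hyAi
    set ty := p''.takeUntil y hy with hty
    set dy := p''.dropUntil y hy with hdy
    have hzs_not : zs ∉ ty.support := by
      intro hzin
      have hd : zs ∈ dy.support.tail := by
        have h1 : dy.support = y :: dy.support.tail := dy.support_eq_cons
        have h2 : zs ∈ dy.support := dy.end_mem_support
        rw [h1] at h2
        rcases List.mem_cons.mp h2 with h3 | h3
        · exact absurd h3.symm hne'
        · exact h3
      have hspec : ty.append dy = p'' := p''.take_spec hy
      have hsup2 : p''.support = ty.support ++ dy.support.tail := by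
        rw [← hspec, Walk.support_append]
      have hc2 : 2 ≤ p''.support.count zs := by
        rw [hsup2, List.count_append]
        have c1 : 1 ≤ ty.support.count zs := List.one_le_count_iff.mpr hzin
        have c2 : 1 ≤ dy.support.tail.count zs := List.one_le_count_iff.mpr hd
        omega
      omega
    have hsubty : {q | q ∈ ty.support} ∩ A ⊆ ({q | q ∈ p''.support} ∩ A) \ {zs} := by
      rintro u ⟨hu, huA⟩
      refine ⟨⟨Walk.support_takeUntil_subset _ _ hu, huA⟩, ?_⟩
      intro hu1
      simp only [Set.mem_singleton_iff] at hu1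
      subst hu1
      exact hzs_not hu
    have hbig : zs ∈ {q | q ∈ p''.support} ∩ A := ⟨p''.end_mem_support, hzsA⟩
    have hcard : (({q | q ∈ p''.support} ∩ A) \ {zs}).ncard = m - 1 := by
      rw [Set.ncard_diff_singleton_of_mem hbig]
      rw [show ({q | q ∈ p''.support} ∩ A).ncard = cntL p''.support A from rfl, hcnt'']
    have hylem : cntL ty.support A ≤ m - 1 := by
      rw [← hcard]
      exact Set.ncard_le_ncard hsubty ((finite_inter _ _).diff)
    have hyle : posA G v w A y ≤ ((m - 1 : ℕ) : ℝ≥0∞) :=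
      le_trans (posA_le y ty (dy.append r)) (by exact_mod_cast hylem)
    rw [hypos] at hyle
    have hle2 : i ≤ m - 1 := by exact_mod_cast hyle
    omega
  have hup : discWidth G v w Ai ≤ 1 := by
    refine le_trans (discWidth_le (p''.append r)) ?_
    have hsub : {q | q ∈ (p''.append r).support} ∩ Ai ⊆ {zs} := by
      rintro u ⟨hu, huAi⟩
      rw [Walk.support_append] at hu
      rcases List.mem_append.mp hu with h1 | h1
      · exact hslim u h1 huAi
      · have h2 : u ∈ t.support := hrsup u (List.mem_of_mem_tail h1)
        exact htAi ⟨h2, huAi⟩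
    have hfin : cntL (p''.append r).support Ai ≤ 1 := by
      calc cntL (p''.append r).support Ai ≤ ({zs} : Set V).ncard :=
          Set.ncard_le_ncard hsub (Set.finite_singleton _)
        _ = 1 := Set.ncard_singleton _
    exact_mod_cast hfin
  exact le_antisymm hup hlow

end Stmt14Aux

end


theorem stmt14 {V : Type*} (G : SimpleGraph V) (v w : V)
    (hne : Nonempty (G.Walk v w)) (A : Set V)
    (hk : 1 ≤ DiscPaper.discWidth G v w A)
    (i : ℕ) (hi1 : 1 ≤ i) (hik : (i : ℝ≥0∞) ≤ DiscPaper.discWidth G v w A) :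
    DiscPaper.IsDiscSep G v w {z ∈ A | DiscPaper.posA G v w A z = (i : ℝ≥0∞)} ∧
      DiscPaper.discWidth G v w {z ∈ A | DiscPaper.posA G v w A z = (i : ℝ≥0∞)} = 1 := by
  constructor
  · intro c
    obtain ⟨z, hz, hzA, hzp⟩ := Stmt14Aux.sep G v w A hik hi1 c
    exact ⟨z, hz, hzA, hzp⟩
  · exact Stmt14Aux.width_one G v w A hne hik hi1
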